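/- arXiv:1210.3587 — 4 statements merged into one kernel-verified Lean document; each statement's English description precedes it below -/
import Mathlib

section
/- Let n be a natural number, A a finite set with |A| = 3n, and S a finite family of subsets of A each of cardinality exactly 3. Then the following are equivalent: (i) there exists a subfamily S′ ⊆ S with |S′| = n whose members are pairwise disjoint and whose union is A (an exact 3-cover of A); (ii) there exists a function g : A → S such that a ∈ g(a) for every a ∈ A and the image g(A) has at most n elements. (This equivalence is the combinatorial core of the reduction from Exact Cover by 3-Sets that establishes NP-hardness of the minimum weighted bounded consistent tree problem: a function g as in (ii) corresponds to a bounded consistent tree of total weight at most 4n in the two-level graph whose source points to each S_i and where each S_i points to its three elements, all edges having weight 1.) -/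
/-- The combinatorial core of the reduction from Exact Cover by 3-Sets:
given a set `A` of `3n` elements and a family `S` of 3-element subsets of `A`,
there is an exact 3-cover of `A` by `n` pairwise-disjoint members of `S` iff
there is a function `g : A → S` with `a ∈ g a` for every `a ∈ A` whose image has
at most `n` elements. -/
theorem stmt_4 {α : Type*} [DecidableEq α] (n : ℕ) (A : Finset α)
    (S : Finset (Finset α)) (hA : A.card = 3 * n)
    (hS : ∀ B ∈ S, B ⊆ A ∧ B.card = 3) :
    (∃ S' ⊆ S, S'.card = n ∧
        (S' : Set (Finset α)).Pairwise (fun B C => Disjoint B C) ∧ S'.sup id = A) ↔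
      ∃ g : α → Finset α, (∀ a ∈ A, g a ∈ S ∧ a ∈ g a) ∧ (A.image g).card ≤ n := by
  classical
  constructor
  · rintro ⟨S', hsub, hcard, _, hsup⟩
    have hex : ∀ a ∈ A, ∃ B ∈ S', a ∈ B := by
      intro a ha
      rw [← hsup] at ha
      simpa [Finset.mem_sup] using ha
    refine ⟨fun a => if h : ∃ B ∈ S', a ∈ B then h.choose else ∅, ?_, ?_⟩
    · intro a ha
      obtain ⟨B, hB, haB⟩ := hex a ha
      have h : ∃ B ∈ S', a ∈ B := ⟨B, hB, haB⟩
      simp only [dif_pos h]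
      exact ⟨hsub h.choose_spec.1, h.choose_spec.2⟩
    · calc (A.image _).card ≤ S'.card := by
            apply Finset.card_le_card
            intro B hB
            simp only [Finset.mem_image] at hB
            obtain ⟨a, ha, rfl⟩ := hB
            have h : ∃ B ∈ S', a ∈ B := hex a ha
            simp only [dif_pos h]
            exact h.choose_spec.1
        _ = n := hcard
  · rintro ⟨g, hg, hcard⟩
    set S' := A.image g with hS'
    have hsub : S' ⊆ S := by
      intro B hB
      simp only [hS', Finset.mem_image] at hB
      obtain ⟨a, ha, rfl⟩ := hB
      exact (hg a ha).1
    -- each member has card 3 and is ⊆ A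
    have h3 : ∀ B ∈ S', B.card = 3 := fun B hB => (hS B (hsub hB)).2
    have hBA : ∀ B ∈ S', B ⊆ A := fun B hB => (hS B (hsub hB)).1
    -- double counting
    have hcount : ∑ B ∈ S', B.card = ∑ a ∈ A, (S'.filter (fun B => a ∈ B)).card := by
      have : ∀ B ∈ S', B.card = ∑ a ∈ A, (if a ∈ B then 1 else 0) := by
        intro B hB
        rw [← Finset.card_filter]
        congr 1
        rw [Finset.filter_mem_eq_inter, Finset.inter_eq_right.2 (hBA B hB)]
      rw [Finset.sum_congr rfl this, Finset.sum_comm]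
      simp only [Finset.card_filter]
    have hsum3 : ∑ B ∈ S', B.card = 3 * S'.card := by
      rw [Finset.sum_congr rfl h3]; simp [Nat.mul_comm]
    have hone : ∀ a ∈ A, 1 ≤ (S'.filter (fun B => a ∈ B)).card := by
      intro a ha
      refine Finset.card_pos.2 ⟨g a, ?_⟩
      simp only [Finset.mem_filter]
      exact ⟨Finset.mem_image_of_mem g ha, (hg a ha).2⟩
    have hle : ∑ a ∈ A, (S'.filter (fun B => a ∈ B)).card ≤ 3 * n := by
      rw [← hcount, hsum3]
      omega
    have hge : 3 * n ≤ ∑ a ∈ A, (S'.filter (fun B => a ∈ B)).card := by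
      calc 3 * n = ∑ _a ∈ A, 1 := by simp [hA]
        _ ≤ _ := Finset.sum_le_sum hone
    have heq : ∑ a ∈ A, (S'.filter (fun B => a ∈ B)).card = 3 * n := le_antisymm hle hge
    have hcardS' : S'.card = n := by
      have := hcount
      rw [hsum3, heq] at this
      omega
    have hexact : ∀ a ∈ A, (S'.filter (fun B => a ∈ B)).card = 1 := by
      by_contra h
      push_neg at h
      obtain ⟨a, ha, hne⟩ := h
      have h2 : 2 ≤ (S'.filter (fun B => a ∈ B)).card := by
        have := hone a ha; omega
      have : 3 * n < ∑ a ∈ A, (S'.filter (fun B => a ∈ B)).card := by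
        calc 3 * n = ∑ _a ∈ A, 1 := by simp [hA]
          _ < _ := Finset.sum_lt_sum hone ⟨a, ha, by omega⟩
      omega
    refine ⟨S', hsub, hcardS', ?_, ?_⟩
    · intro B hB C hC hBC
      rw [Finset.disjoint_left]
      intro a haB haC
      have haA : a ∈ A := hBA B hB haB
      have h1 := hexact a haA
      have : ({B, C} : Finset (Finset α)) ⊆ S'.filter (fun X => a ∈ X) := by
        intro X hX
        simp only [Finset.mem_insert, Finset.mem_singleton] at hX
        rcases hX with rfl | rfl <;>
          simp [Finset.mem_filter, Finset.mem_coe.1 hB, Finset.mem_coe.1 hC, haB, haC]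
      have h2 : ({B, C} : Finset (Finset α)).card = 2 := by
        rw [Finset.card_insert_of_notMem (by simpa using hBC), Finset.card_singleton]
      have := Finset.card_le_card this
      omega
    · apply Finset.Subset.antisymm
      · intro a ha
        simp only [Finset.mem_sup, id] at ha
        obtain ⟨B, hB, haB⟩ := ha
        exact hBA B hB haB
      · intro a ha
        rw [Finset.mem_sup]
        exact ⟨g a, Finset.mem_image_of_mem g ha, (hg a ha).2⟩
end

section
/- Let G be a finite directed graph with edge weights w : E → ℝ satisfying 0 < a ≤ w(e) ≤ b for every edge e, let s be a vertex, and let X be a partial observation with (s,0) ∈ X such that every (v,t) ∈ X satisfies that v is reachable from s and dist(s,v) ≤ t. Let T₀ be any shortest-path arborescence of G rooted at s (an arborescence whose vertices are exactly the vertices reachable from s and in which the unique path from s to each vertex v has length dist(s,v)), and let T be the subgraph of T₀ formed by the union of the T₀-paths from s to the vertices occurring in X. Then T is a bounded consistent tree w.r.t. X, and for every bounded consistent tree T* w.r.t. X, the total weight of T satisfies Σ_{e ∈ E(T)} w(e) ≤ |X| · (b/a) · Σ_{e ∈ E(T*)} w(e), where |X| is the number of observation points in X. (This is the approximation guarantee,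 within factor |X| · (log f_min)/(log f_max), for the minimum weighted bounded consistent tree problem, with w(e) = −log f(e), a = −log f_max, b = −log f_min.) -/
/-- `IsWalk E u v l`: the nonempty list `l` of vertices is a walk from `u` to `v`
along the edge relation `E` (consecutive vertices are joined by an edge). -/
def IsWalk {V : Type*} (E : V → V → Prop) (u v : V) (l : List V) : Prop :=
  l.head? = some u ∧ l.getLast? = some v ∧ l.Chain' E

/-- The length (number of edges) of a walk given by its list of vertices. -/
def wlen {V : Type*} (l : List V) : ℕ := l.length - 1

/-- `v` is reachable from `u` along the edge relation `E`. -/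
def Reach {V : Type*} (E : V → V → Prop) (u v : V) : Prop := ∃ l, IsWalk E u v l

/-- The distance from `u` to `v`: the minimum length of a walk from `u` to `v`
(equal to `0` by convention when `v` is not reachable from `u`). -/
noncomputable def gdist {V : Type*} (E : V → V → Prop) (u v : V) : ℕ :=
  sInf {n | ∃ l, IsWalk E u v l ∧ wlen l = n}

/-- An arborescence of the graph with edge relation `E`, rooted at `s`:
a subgraph (given by its vertex set and edge relation) containing `s`,
in which every vertex is joined from `s` by a unique path. -/
structure Arb {V : Type*} (E : V → V → Prop) (s : V) where
  verts : Set V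
  edges : V → V → Prop
  edges_sub : ∀ u v, edges u v → E u v
  edges_mem : ∀ u v, edges u v → u ∈ verts ∧ v ∈ verts
  root_mem : s ∈ verts
  unique_walk : ∀ v ∈ verts, ∃! l, IsWalk edges s v l

open Classical in
/-- The total weight of the edges of a subgraph given by an edge relation `R`,
with edge weights `w`. -/
noncomputable def wsum {V : Type*} [Fintype V] (R : V → V → Prop) (w : V → V → ℝ) : ℝ :=
  ∑ p : V × V, if R p.1 p.2 then w p.1 p.2 else 0

namespace BCT
variable {V : Type*}

lemma walk_mono {E E' : V → V → Prop} (h : ∀ u v, E u v → E' u v) {u v : V} {l : List V}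
    (hw : IsWalk E u v l) : IsWalk E' u v l :=
  ⟨hw.1, hw.2.1, hw.2.2.imp h⟩

lemma edge_of_infix {E : V → V → Prop} {l : List V} (hc : l.Chain' E) {u u' : V}
    (h : [u, u'] <:+: l) : E u u' :=
  List.isChain_pair.mp (hc.infix h)

lemma infix_pair_iff {l : List V} {u u' : V} :
    [u, u'] <:+: l ↔ (u, u') ∈ l.zip l.tail := by
  induction l with
  | nil =>
    simp only [List.zip_nil_left, List.not_mem_nil, iff_false]
    intro h
    have := h.length_le; simp at this
  | cons x t ih =>
    cases t with
    | nil =>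
      simp only [List.tail_cons, List.zip_nil_right, List.not_mem_nil, iff_false]
      intro h
      have := h.length_le; simp at this
    | cons y r =>
      constructor
      · rintro ⟨l₁, l₂, hl⟩
        cases l₁ with
        | nil =>
          simp only [List.nil_append, List.cons_append, List.cons.injEq] at hl
          obtain ⟨rfl, rfl, _⟩ := hl
          simp
        | cons z t₁ =>
          simp only [List.cons_append, List.cons.injEq] at hl
          obtain ⟨rfl, hl⟩ := hl
          have : [u, u'] <:+: y :: r := ⟨t₁, l₂, hl⟩
          simp only [List.tail_cons]
          rw [List.zip_cons_cons]
          right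
          exact ih.mp this
      · intro h
        simp only [List.tail_cons, List.zip_cons_cons, List.mem_cons] at h
        rcases h with h | h
        · obtain ⟨rfl, rfl⟩ := Prod.mk.injEq .. ▸ h
          exact ⟨[], r, rfl⟩
        · exact (ih.mpr h).trans (List.suffix_cons x (y :: r)).isInfix

lemma chain'_infix : ∀ (l : List V), l.Chain' (fun u u' => [u, u'] <:+: l)
  | [] => .nil
  | [_] => .singleton _
  | x :: y :: r => by
    refine List.isChain_cons_cons.mpr ⟨⟨[], r, rfl⟩, ?_⟩
    exact (chain'_infix (y :: r)).imp
      (fun a b hab => hab.trans (List.suffix_cons x (y :: r)).isInfix)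

lemma mem_verts_of_walk {R : V → V → Prop} {S : Set V} (hmem : ∀ u v, R u v → u ∈ S ∧ v ∈ S) :
    ∀ {l : List V} {s v : V}, s ∈ S → IsWalk R s v l → ∀ u ∈ l, u ∈ S := by
  intro l
  induction l with
  | nil => intro s v _ h; exact absurd h.1 (by simp)
  | cons x t ih =>
    intro s v hs hwalk u hu
    obtain ⟨h1, h2, h3⟩ := hwalk
    simp only [List.head?_cons, Option.some.injEq] at h1
    subst h1
    rcases List.mem_cons.mp hu with rfl | hu
    · exact hs
    · cases t with
      | nil => simp at hu
      | cons y r =>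
        have hc := List.isChain_cons_cons.mp h3
        exact ih (hmem _ _ hc.1).2
          ⟨rfl, by rw [List.getLast?_cons_cons] at h2; exact h2, hc.2⟩ u hu

lemma walk_prefix {R : V → V → Prop} {s u : V} {v : V} {l₁ l₂ : List V}
    (h : IsWalk R s v (l₁ ++ u :: l₂)) : IsWalk R s u (l₁ ++ [u]) := by
  obtain ⟨h1, h2, h3⟩ := h
  refine ⟨?_, by simp, h3.prefix ⟨l₂, by simp⟩⟩
  cases l₁ <;> simpa using h1

lemma walk_shortcut {R : V → V → Prop} {s v x : V} {l₁ l₂ l₃ : List V}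
    (h : IsWalk R s v (l₁ ++ x :: (l₂ ++ x :: l₃))) : IsWalk R s v (l₁ ++ x :: l₃) := by
  obtain ⟨h1, h2, h3⟩ := h
  refine ⟨?_, ?_, ?_⟩
  · cases l₁ <;> simpa using h1
  · rw [List.getLast?_append] at h2 ⊢
    have : (x :: (l₂ ++ x :: l₃)).getLast? = (x :: l₃).getLast? := by
      have : x :: (l₂ ++ x :: l₃) = (x :: l₂) ++ (x :: l₃) := by simp
      rw [this, List.getLast?_append]
      exact Option.or_of_isSome (by rw [List.getLast?_isSome]; simp)
    rw [this] at h2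
    exact h2
  · have hre : l₁ ++ x :: (l₂ ++ x :: l₃) = l₁ ++ ((x :: l₂) ++ (x :: l₃)) := by simp
    simp only [List.Chain'] at h3 ⊢
    rw [hre, List.isChain_append, List.isChain_append] at h3
    rw [List.isChain_append]
    refine ⟨h3.1, h3.2.1.2.1, ?_⟩
    intro p hp q hq
    exact h3.2.2 p hp q (by simpa using hq)

lemma dup_decomp : ∀ {l : List V}, ¬ l.Nodup → ∃ x l₁ l₂ l₃, l = l₁ ++ x :: (l₂ ++ x :: l₃) := by
  intro l
  induction l with
  | nil => intro h; exact absurd List.nodup_nil h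
  | cons a t ih =>
    intro h
    by_cases ha : a ∈ t
    · obtain ⟨l₂, l₃, rfl⟩ := List.append_of_mem ha
      exact ⟨a, [], l₂, l₃, rfl⟩
    · have ht : ¬ t.Nodup := by
        simp only [List.nodup_cons] at h; tauto
      obtain ⟨x, l₁, l₂, l₃, rfl⟩ := ih ht
      exact ⟨x, a :: l₁, l₂, l₃, rfl⟩

lemma exists_nodup_walk {R : V → V → Prop} {s v : V} :
    ∀ n (l : List V), l.length ≤ n → IsWalk R s v l →
      ∃ l', IsWalk R s v l' ∧ l'.Nodup := by
  intro n
  induction n with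
  | zero =>
    intro l hl h
    rw [Nat.le_zero, List.length_eq_zero_iff] at hl
    subst hl
    exact absurd h.1 (by simp)
  | succ n ih =>
    intro l hl h
    by_cases hd : l.Nodup
    · exact ⟨l, h, hd⟩
    · obtain ⟨x, l₁, l₂, l₃, rfl⟩ := dup_decomp hd
      refine ih (l₁ ++ x :: l₃) ?_ (walk_shortcut h)
      simp only [List.length_append, List.length_cons] at hl ⊢
      omega

lemma nodup_zip_tail {l : List V} (h : l.Nodup) : (l.zip l.tail).Nodup := by
  have := List.map_snd_zip (l₁ := l) (l₂ := l.tail) (by cases l <;> simp)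
  have htl : l.tail.Nodup := h.sublist (List.tail_sublist l)
  rw [← this] at htl
  exact htl.of_map _

lemma length_zip_tail (l : List V) : (l.zip l.tail).length = wlen l := by
  rw [List.length_zip, wlen]
  cases l with
  | nil => simp
  | cons x t =>
    simp only [List.length_cons, List.tail_cons]
    rw [Nat.min_def]
    split <;> omega

open Classical in
lemma wsum_eq [Fintype V] (R : V → V → Prop) (w : V → V → ℝ) :
    wsum R w = ∑ p ∈ Finset.univ.filter (fun p : V × V => R p.1 p.2), w p.1 p.2 := by
  rw [wsum, Finset.sum_filter]

open Classical in
lemma le_wsum [Fintype V] {R : V → V → Prop} {w : V → V → ℝ}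
    (hnn : ∀ u v, R u v → 0 ≤ w u v) (P : Finset (V × V)) (hP : ∀ p ∈ P, R p.1 p.2) :
    ∑ p ∈ P, w p.1 p.2 ≤ wsum R w := by
  rw [wsum_eq]
  apply Finset.sum_le_sum_of_subset_of_nonneg
  · intro p hp
    simp only [Finset.mem_filter, Finset.mem_univ, true_and]
    exact hP p hp
  · intro p hp _
    exact hnn p.1 p.2 (by simpa using hp)

open Classical in
lemma wsum_le [Fintype V] {R : V → V → Prop} {w : V → V → ℝ} {b : ℝ} (F : Finset (V × V))
    (hsub : ∀ u v, R u v → (u, v) ∈ F) (hb : ∀ u v, R u v → w u v ≤ b) (hb0 : 0 ≤ b) :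
    wsum R w ≤ F.card * b := by
  rw [wsum_eq]
  have h1 : ∑ p ∈ Finset.univ.filter (fun p : V × V => R p.1 p.2), w p.1 p.2
      ≤ ∑ _p ∈ Finset.univ.filter (fun p : V × V => R p.1 p.2), b :=
    Finset.sum_le_sum (fun p hp => hb p.1 p.2 (by simpa using hp))
  have h2 : ∑ _p ∈ Finset.univ.filter (fun p : V × V => R p.1 p.2), b ≤ ∑ _p ∈ F, b :=
    Finset.sum_le_sum_of_subset_of_nonneg
      (fun p hp => hsub p.1 p.2 (by simpa using hp)) (fun _ _ _ => hb0)
  calc ∑ p ∈ Finset.univ.filter (fun p : V × V => R p.1 p.2), w p.1 p.2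
      ≤ ∑ _p ∈ F, b := h1.trans h2
    _ = F.card * b := by rw [Finset.sum_const, nsmul_eq_mul]

end BCT

open BCT in
/-- Approximation guarantee for the minimum weighted bounded consistent tree problem:
given edge weights `w` with `0 < a ≤ w(e) ≤ b`, a partial observation `X` each of
whose points `(v,t)` satisfies `dist(s,v) ≤ t`, and a shortest-path arborescence
`T₀` rooted at `s`, the union `T` of the `T₀`-paths from `s` to the observed
vertices is a bounded consistent tree w.r.t. `X`, and its weight is at most
`|X| · (b/a)` times the weight of any bounded consistent tree `T*` w.r.t. `X`. -/
theorem stmt_5 {V : Type*} [Fintype V] (E : V → V → Prop) (w : V → V → ℝ)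
    (a b : ℝ) (ha : 0 < a) (hw : ∀ u v, E u v → a ≤ w u v ∧ w u v ≤ b)
    (s : V) (X : Finset (V × ℕ)) (hsX : (s, 0) ∈ X)
    (hX : ∀ p ∈ X, Reach E s p.1 ∧ gdist E s p.1 ≤ p.2)
    (T₀ : Arb E s) (hT₀v : T₀.verts = {v | Reach E s v})
    (hT₀d : ∀ v ∈ T₀.verts, ∀ l, IsWalk T₀.edges s v l → wlen l = gdist E s v) :
    ∃ T : Arb E s,
      T.verts = {u | ∃ p ∈ X, ∃ l, IsWalk T₀.edges s p.1 l ∧ u ∈ l} ∧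
      T.edges = (fun u u' => ∃ p ∈ X, ∃ l, IsWalk T₀.edges s p.1 l ∧ [u, u'] <:+: l) ∧
      (∀ p ∈ X, p.1 ∈ T.verts ∧ ∀ l, IsWalk T.edges s p.1 l → wlen l ≤ p.2) ∧
      ∀ T' : Arb E s,
        (∀ p ∈ X, p.1 ∈ T'.verts ∧ ∀ l, IsWalk T'.edges s p.1 l → wlen l ≤ p.2) →
        wsum T.edges w ≤ X.card * (b / a) * wsum T'.edges w := by
  classical
  have hvert : ∀ p ∈ X, p.1 ∈ T₀.verts := fun p hp => by
    rw [hT₀v]; exact (hX p hp).1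
  have hTeT₀ : ∀ u u', (∃ p ∈ X, ∃ l, IsWalk T₀.edges s p.1 l ∧ [u, u'] <:+: l) →
      T₀.edges u u' := by
    rintro u u' ⟨p, hp, l, hl, hinf⟩
    exact edge_of_infix hl.2.2 hinf
  have hmk : ∀ p ∈ X, ∀ l, IsWalk T₀.edges s p.1 l → ∀ u ∈ l,
      ∃ l', IsWalk (fun u u' => ∃ p ∈ X, ∃ l, IsWalk T₀.edges s p.1 l ∧ [u, u'] <:+: l)
        s u l' := by
    intro p hp l hl u hu
    obtain ⟨l₁, l₂, rfl⟩ := List.append_of_mem hu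
    have hpre := walk_prefix hl
    refine ⟨l₁ ++ [u], hpre.1, hpre.2.1, (chain'_infix (l₁ ++ [u])).imp ?_⟩
    intro x y hxy
    exact ⟨p, hp, _, hl,
      hxy.trans (List.IsPrefix.isInfix ⟨l₂, by simp⟩)⟩
  refine ⟨⟨{u | ∃ p ∈ X, ∃ l, IsWalk T₀.edges s p.1 l ∧ u ∈ l},
          fun u u' => ∃ p ∈ X, ∃ l, IsWalk T₀.edges s p.1 l ∧ [u, u'] <:+: l,
          fun u v h => T₀.edges_sub u v (hTeT₀ u v h), ?_, ?_, ?_⟩, rfl, rfl, ?_, ?_⟩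
  · rintro u v ⟨p, hp, l, hl, hinf⟩
    exact ⟨⟨p, hp, l, hl, hinf.subset (by simp)⟩, ⟨p, hp, l, hl, hinf.subset (by simp)⟩⟩
  · obtain ⟨l, hl⟩ := (T₀.unique_walk s T₀.root_mem).exists
    exact ⟨(s, 0), hsX, l, hl, List.mem_of_mem_head? hl.1⟩
  · rintro v ⟨p, hp, l, hl, hu⟩
    obtain ⟨l', hl'⟩ := hmk p hp l hl v hu
    have hvT₀ : v ∈ T₀.verts := mem_verts_of_walk T₀.edges_mem T₀.root_mem hl v hu
    obtain ⟨l₀, hl₀, huniq⟩ := T₀.unique_walk v hvT₀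
    refine ⟨l', hl', fun l₂ hl₂ => ?_⟩
    rw [huniq l₂ (walk_mono hTeT₀ hl₂), huniq l' (walk_mono hTeT₀ hl')]
  · intro p hp
    obtain ⟨lp, hlp, hup⟩ := T₀.unique_walk p.1 (hvert p hp)
    have hmem : p.1 ∈ lp := List.mem_of_mem_getLast? hlp.2.1
    refine ⟨⟨p, hp, lp, hlp, hmem⟩, fun l hl => ?_⟩
    have hleq : l = lp := hup l (walk_mono hTeT₀ hl)
    rw [hleq, hT₀d p.1 (hvert p hp) lp hlp]
    exact (hX p hp).2
  · intro T' hT'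
    by_cases hE : ∃ u v, E u v
    · obtain ⟨u₀, v₀, he₀⟩ := hE
      have hab : a ≤ b := le_trans (hw _ _ he₀).1 (hw _ _ he₀).2
      have hb0 : 0 ≤ b := le_trans ha.le hab
      have hW'nn : ∀ u v, T'.edges u v → 0 ≤ w u v := fun u v h =>
        le_trans ha.le (hw u v (T'.edges_sub u v h)).1
      have hkey : ∀ p ∈ X, a * (gdist E s p.1 : ℝ) ≤ wsum T'.edges w := by
        intro p hp
        obtain ⟨l₀, hl₀⟩ := (T'.unique_walk p.1 (hT' p hp).1).exists
        obtain ⟨l', hl', hnd⟩ := exists_nodup_walk l₀.length l₀ le_rfl hl₀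
        have hgd : gdist E s p.1 ≤ wlen l' :=
          Nat.sInf_le ⟨l', walk_mono T'.edges_sub hl', rfl⟩
        have hP : ∀ q ∈ (l'.zip l'.tail).toFinset, T'.edges q.1 q.2 := by
          rintro ⟨q1, q2⟩ hq
          rw [List.mem_toFinset] at hq
          exact edge_of_infix hl'.2.2 (infix_pair_iff.mpr hq)
        have hcard : (l'.zip l'.tail).toFinset.card = wlen l' := by
          rw [List.toFinset_card_of_nodup (nodup_zip_tail hnd), length_zip_tail]
        have h1 : a * (wlen l' : ℝ) ≤ ∑ q ∈ (l'.zip l'.tail).toFinset, w q.1 q.2 := by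
          have := Finset.sum_le_sum
            (f := fun _ : V × V => a) (g := fun q : V × V => w q.1 q.2)
            (fun q hq => (hw q.1 q.2 (T'.edges_sub _ _ (hP q hq))).1)
          rw [Finset.sum_const, nsmul_eq_mul, hcard] at this
          linarith
        have h2 := le_wsum hW'nn _ hP
        calc a * (gdist E s p.1 : ℝ) ≤ a * (wlen l' : ℝ) := by
              apply mul_le_mul_of_nonneg_left _ ha.le
              exact_mod_cast hgd
          _ ≤ wsum T'.edges w := h1.trans h2
      have hwalks := fun (p : X) => T₀.unique_walk p.1.1 (hvert p.1 p.2)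
      choose lp hlp hulp using hwalks
      set F : Finset (V × V) := X.attach.biUnion
        (fun p => ((lp p).zip (lp p).tail).toFinset) with hF
      have hsub : ∀ u u', (∃ p ∈ X, ∃ l, IsWalk T₀.edges s p.1 l ∧ [u, u'] <:+: l) →
          (u, u') ∈ F := by
        rintro u u' ⟨p, hp, l, hl, hinf⟩
        have hleq : l = lp ⟨p, hp⟩ := hulp ⟨p, hp⟩ l hl
        subst hleq
        exact Finset.mem_biUnion.mpr ⟨⟨p, hp⟩, Finset.mem_attach _ _,
          List.mem_toFinset.mpr (infix_pair_iff.mp hinf)⟩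
      have hup : wsum (fun u u' => ∃ p ∈ X, ∃ l, IsWalk T₀.edges s p.1 l ∧ [u, u'] <:+: l) w
          ≤ F.card * b :=
        wsum_le F hsub (fun u v h => (hw u v (T₀.edges_sub _ _ (hTeT₀ u v h))).2) hb0
      have hcardF : (F.card : ℝ) ≤ ∑ p ∈ X.attach, (gdist E s p.1.1 : ℝ) := by
        have h1 : F.card ≤ ∑ p ∈ X.attach, ((lp p).zip (lp p).tail).toFinset.card :=
          Finset.card_biUnion_le
        have h2 : ∀ p ∈ X.attach, ((lp p).zip (lp p).tail).toFinset.card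
            ≤ gdist E s p.1.1 := by
          intro p _
          calc ((lp p).zip (lp p).tail).toFinset.card ≤ ((lp p).zip (lp p).tail).length :=
                List.toFinset_card_le _
            _ = wlen (lp p) := length_zip_tail _
            _ = gdist E s p.1.1 := hT₀d _ (hvert p.1 p.2) _ (hlp p)
        exact_mod_cast h1.trans (Finset.sum_le_sum h2)
      have hsumbound : ∑ p ∈ X.attach, (gdist E s p.1.1 : ℝ)
          ≤ X.card * (wsum T'.edges w / a) := by
        have hle : ∀ p ∈ X.attach, (gdist E s p.1.1 : ℝ) ≤ wsum T'.edges w / a := by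
          intro p _
          rw [le_div_iff₀ ha]
          linarith [hkey p.1 p.2]
        calc ∑ p ∈ X.attach, (gdist E s p.1.1 : ℝ)
            ≤ ∑ _p ∈ X.attach, wsum T'.edges w / a := Finset.sum_le_sum hle
          _ = X.card * (wsum T'.edges w / a) := by
              rw [Finset.sum_const, Finset.card_attach, nsmul_eq_mul]
      calc wsum (fun u u' => ∃ p ∈ X, ∃ l, IsWalk T₀.edges s p.1 l ∧ [u, u'] <:+: l) w
          ≤ F.card * b := hup
        _ ≤ (∑ p ∈ X.attach, (gdist E s p.1.1 : ℝ)) * b :=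
            mul_le_mul_of_nonneg_right hcardF hb0
        _ ≤ (X.card * (wsum T'.edges w / a)) * b :=
            mul_le_mul_of_nonneg_right hsumbound hb0
        _ = X.card * (b / a) * wsum T'.edges w := by ring
    · push_neg at hE
      have h1 : wsum (fun u u' => ∃ p ∈ X, ∃ l, IsWalk T₀.edges s p.1 l ∧ [u, u'] <:+: l) w
          = 0 := by
        rw [wsum]
        apply Finset.sum_eq_zero
        intro q _
        rw [if_neg]
        intro h
        exact hE q.1 q.2 (T₀.edges_sub _ _ (hTeT₀ _ _ h))
      have h2 : wsum T'.edges w = 0 := by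
        rw [wsum]
        apply Finset.sum_eq_zero
        intro q _
        rw [if_neg]
        intro h
        exact hE q.1 q.2 (T'.edges_sub _ _ h)
      rw [h1, h2]
      simp
end

section
/- Let G be a finite directed graph, s a vertex, and X a partial observation with (s,0) ∈ X such that every (v,t) ∈ X satisfies that v is reachable from s and dist(s,v) ≤ t. Let T₀ be any shortest-path arborescence of G rooted at s, and let T be the subgraph of T₀ formed by the union of the T₀-paths from s to the vertices occurring in X. Then T is a bounded consistent tree w.r.t. X, and for every bounded consistent tree T* w.r.t. X, the number of edges of T satisfies |E(T)| ≤ |X| · |E(T*)|. (This is the |X|-factor approximation guarantee for the minimum bounded consistent tree problem.) -/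
lemma walk_ne_nil {V : Type*} {E : V → V → Prop} {u v : V} {l : List V}
    (h : IsWalk E u v l) : l ≠ [] := by
  rintro rfl; simp [IsWalk] at h

lemma walk_sub {V : Type*} {E₁ E₂ : V → V → Prop} {u v : V} {l : List V}
    (h : IsWalk E₁ u v l) (hs : ∀ a b, E₁ a b → E₂ a b) : IsWalk E₂ u v l :=
  ⟨h.1, h.2.1, h.2.2.imp (fun {a b} => hs a b)⟩

lemma walk_getElem_zero {V : Type*} {E : V → V → Prop} {u v : V} {l : List V}
    (h : IsWalk E u v l) (h0 : 0 < l.length) : l[0] = u := by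
  have := h.1
  rw [List.head?_eq_getElem?, List.getElem?_eq_getElem h0] at this
  exact Option.some_injective _ this

lemma walk_getElem_last {V : Type*} {E : V → V → Prop} {u v : V} {l : List V}
    (h : IsWalk E u v l) (hl : l.length - 1 < l.length) : l[l.length - 1] = v := by
  have := h.2.1
  rw [List.getLast?_eq_getElem?, List.getElem?_eq_getElem hl] at this
  exact Option.some_injective _ this

lemma take_isWalk {V : Type*} {E : V → V → Prop} {u v : V} {l : List V}
    (h : IsWalk E u v l) {i : ℕ} (hi : i < l.length) :
    IsWalk E u l[i] (l.take (i+1)) := by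
  refine ⟨?_, ?_, h.2.2.prefix (List.take_prefix _ _)⟩
  · rw [List.head?_take]; simp [h.1]
  · rw [List.getLast?_eq_getElem?]
    have hlen : (l.take (i+1)).length = i + 1 := by simp; omega
    rw [hlen]
    simp [List.getElem?_take, List.getElem?_eq_getElem hi]

lemma infix_pair {V : Type*} {l : List V} {i : ℕ} (hi : i + 1 < l.length) :
    [l[i], l[i+1]] <:+: l := by
  refine ⟨l.take i, l.drop (i+2), ?_⟩
  have h2 : l.drop i = l[i] :: l[i+1] :: l.drop (i+2) := by
    rw [List.drop_eq_getElem_cons (show i < l.length by omega),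
      List.drop_eq_getElem_cons (show i+1 < l.length from hi)]
  conv_rhs => rw [← List.take_append_drop i l, h2]
  simp

lemma edge_of_infix {V : Type*} {E : V → V → Prop} {l : List V} {a b : V}
    (hc : l.Chain' E) (h : [a, b] <:+: l) : E a b := by
  have := hc.infix h
  simpa using this

lemma pair_mem_zip {V : Type*} {l : List V} {a b : V} (h : [a, b] <:+: l) :
    (a, b) ∈ l.zip l.tail := by
  obtain ⟨x, y, hxy⟩ := h
  rw [List.append_assoc] at hxy
  have hla : l[x.length]? = some a := by
    rw [← hxy, List.getElem?_append_right (le_refl _)]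
    simp
  have hlb : l[x.length + 1]? = some b := by
    rw [← hxy, List.getElem?_append_right (by omega)]
    have h1 : x.length + 1 - x.length = 1 := by omega
    rw [h1]; simp
  have hlen : x.length + 1 < l.length := by
    have := List.getElem?_eq_some_iff.mp hlb
    exact this.1
  have hzl : x.length < (l.zip l.tail).length := by
    simp [Nat.min_def]; omega
  rw [List.mem_iff_getElem]
  refine ⟨x.length, hzl, ?_⟩
  rw [List.getElem_zip, List.getElem_tail]
  have ha : l[x.length] = a := by
    rw [List.getElem?_eq_getElem (by omega)] at hla; exact Option.some_injective _ hla
  have hb : l[x.length + 1] = b := by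
    rw [List.getElem?_eq_getElem (by omega)] at hlb; exact Option.some_injective _ hlb
  rw [ha, hb]


lemma mem_verts_of_walk {V : Type*} {E : V → V → Prop} {s : V} (T : Arb E s)
    {v : V} {l : List V} (h : IsWalk T.edges s v l) : ∀ x ∈ l, x ∈ T.verts := by
  intro x hx
  rw [List.mem_iff_getElem] at hx
  obtain ⟨i, hi, rfl⟩ := hx
  rcases Nat.eq_zero_or_pos i with rfl | hpos
  · rw [walk_getElem_zero h hi]; exact T.root_mem
  · obtain ⟨j, rfl⟩ := Nat.exists_eq_add_of_lt hpos
    simp only [Nat.zero_add] at *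
    have hc := List.isChain_iff_getElem.mp h.2.2 j (by omega)
    exact (T.edges_mem _ _ hc).2

lemma walk_nodup {V : Type*} {E : V → V → Prop} {s : V} (T : Arb E s)
    {v : V} {l : List V} (h : IsWalk T.edges s v l) : l.Nodup := by
  by_contra hnd
  rw [List.nodup_iff_injective_get] at hnd
  rw [Function.not_injective_iff] at hnd
  obtain ⟨⟨i, hi⟩, ⟨j, hj⟩, heq, hne⟩ := hnd
  simp only [List.get_eq_getElem, Fin.val_mk] at heq
  have hij : i ≠ j := fun hh => hne (Fin.ext hh)
  rcases Nat.lt_or_ge i j with hlt | hge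
  case _ =>
    have hmem : l[i] ∈ T.verts := mem_verts_of_walk T h l[i] (List.getElem_mem hi)
    have w1 := take_isWalk h hi
    have w2 := take_isWalk h hj
    rw [← heq] at w2
    have heql := (T.unique_walk _ hmem).unique w1 w2
    have hlen := congrArg List.length heql
    simp only [List.length_take] at hlen
    rw [min_eq_left (by omega), min_eq_left (by omega)] at hlen
    omega
  case _ =>
    have hlt : j < i := by omega
    have hmem : l[j] ∈ T.verts := mem_verts_of_walk T h l[j] (List.getElem_mem hj)
    have w1 := take_isWalk h hj
    have w2 := take_isWalk h hi
    rw [heq] at w2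
    have := (T.unique_walk _ hmem).unique w1 w2
    have hlen := congrArg List.length this
    simp only [List.length_take] at hlen
    rw [min_eq_left (by omega), min_eq_left (by omega)] at hlen
    omega

lemma walk_wlen_le {V : Type*} [Fintype V] {E : V → V → Prop} {s : V} (T : Arb E s)
    {v : V} {l : List V} (h : IsWalk T.edges s v l) :
    wlen l ≤ Set.ncard {e : V × V | T.edges e.1 e.2} := by
  classical
  have hnd := walk_nodup T h
  set z := l.zip l.tail with hz
  have hzlen : z.length = l.length - 1 := by
    rw [hz, List.length_zip, List.length_tail, Nat.min_def]; split <;> omega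
  have hznd : z.Nodup := by
    rw [List.nodup_iff_injective_get]
    rintro ⟨i, hi⟩ ⟨j, hj⟩ hij
    simp only [List.get_eq_getElem, hz, List.getElem_zip] at hij
    have := (Prod.mk.injEq _ _ _ _).mp hij
    have := hnd.getElem_inj_iff.mp this.1
    simpa using this
  have hsub : (z.toFinset : Set (V × V)) ⊆ {e : V × V | T.edges e.1 e.2} := by
    intro e he
    simp only [Finset.coe_sort_coe, List.coe_toFinset, Set.mem_setOf_eq] at he ⊢
    rw [List.mem_iff_getElem] at he
    obtain ⟨i, hi, rfl⟩ := he
    simp only [hz, List.getElem_zip, List.getElem_tail]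
    have hi' : i < l.length - 1 := by rw [hzlen] at hi; exact hi
    have := List.isChain_iff_getElem.mp h.2.2 i (by omega)
    simpa using this
  calc wlen l = z.toFinset.card := by
        rw [List.toFinset_card_of_nodup hznd, hzlen]; rfl
    _ = (z.toFinset : Set (V × V)).ncard := (Set.ncard_coe_finset _).symm
    _ ≤ _ := Set.ncard_le_ncard hsub (Set.toFinite _)

lemma walk_edge_set_ncard {V : Type*} [Fintype V] (l : List V) :
    Set.ncard {e : V × V | [e.1, e.2] <:+: l} ≤ wlen l := by
  classical
  have hsub : {e : V × V | [e.1, e.2] <:+: l} ⊆ ((l.zip l.tail).toFinset : Set (V × V)) := by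
    rintro ⟨a, b⟩ he
    simp only [Set.mem_setOf_eq] at he
    simp only [Finset.coe_sort_coe, List.coe_toFinset, Set.mem_setOf_eq]
    exact pair_mem_zip he
  calc Set.ncard {e : V × V | [e.1, e.2] <:+: l}
      ≤ ((l.zip l.tail).toFinset : Set (V × V)).ncard :=
        Set.ncard_le_ncard hsub (Set.toFinite _)
    _ = (l.zip l.tail).toFinset.card := Set.ncard_coe_finset _
    _ ≤ (l.zip l.tail).length := List.toFinset_card_le _
    _ ≤ wlen l := by
        rw [List.length_zip, List.length_tail, Nat.min_def, wlen]; split <;> omega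

lemma ncard_biUnion_le {α β : Type*} [Fintype β] (s : Finset α) (f : α → Set β) :
    Set.ncard (⋃ a ∈ s, f a) ≤ ∑ a ∈ s, (f a).ncard := by
  classical
  induction s using Finset.induction_on with
  | empty => simp
  | insert a t hns ih =>
    rw [Finset.sum_insert hns]
    calc Set.ncard (⋃ x ∈ insert a t, f x) = Set.ncard (f a ∪ ⋃ x ∈ t, f x) := by
          rw [Finset.set_biUnion_insert]
      _ ≤ (f a).ncard + Set.ncard (⋃ x ∈ t, f x) := Set.ncard_union_le _ _
      _ ≤ _ := by omega


/-- The `|X|`-factor approximation guarantee for the minimum bounded consistent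
tree problem: given a partial observation `X` each of whose points `(v,t)`
satisfies `dist(s,v) ≤ t`, and a shortest-path arborescence `T₀` rooted at `s`,
the union `T` of the `T₀`-paths from `s` to the observed vertices is a bounded
consistent tree w.r.t. `X`, and its number of edges is at most `|X|` times the
number of edges of any bounded consistent tree `T*` w.r.t. `X`. -/
theorem stmt_7 {V : Type*} [Fintype V] (E : V → V → Prop) (s : V)
    (X : Finset (V × ℕ)) (hsX : (s, 0) ∈ X)
    (hX : ∀ p ∈ X, Reach E s p.1 ∧ gdist E s p.1 ≤ p.2)
    (T₀ : Arb E s) (hT₀v : T₀.verts = {v | Reach E s v})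
    (hT₀d : ∀ v ∈ T₀.verts, ∀ l, IsWalk T₀.edges s v l → wlen l = gdist E s v) :
    ∃ T : Arb E s,
      T.verts = {u | ∃ p ∈ X, ∃ l, IsWalk T₀.edges s p.1 l ∧ u ∈ l} ∧
      T.edges = (fun u u' => ∃ p ∈ X, ∃ l, IsWalk T₀.edges s p.1 l ∧ [u, u'] <:+: l) ∧
      (∀ p ∈ X, p.1 ∈ T.verts ∧ ∀ l, IsWalk T.edges s p.1 l → wlen l ≤ p.2) ∧
      ∀ T' : Arb E s,
        (∀ p ∈ X, p.1 ∈ T'.verts ∧ ∀ l, IsWalk T'.edges s p.1 l → wlen l ≤ p.2) →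
        Set.ncard {e : V × V | T.edges e.1 e.2} ≤
          X.card * Set.ncard {e : V × V | T'.edges e.1 e.2} := by
  classical
  have hsT₀ : ∀ p ∈ X, p.1 ∈ T₀.verts := fun p hp => by
    rw [hT₀v]; exact (hX p hp).1
  set Erel : V → V → Prop :=
    (fun u u' => ∃ p ∈ X, ∃ l, IsWalk T₀.edges s p.1 l ∧ [u, u'] <:+: l) with hErel
  have hE0 : ∀ u u', Erel u u' → T₀.edges u u' := by
    rintro u u' ⟨p, hp, l, hl, hinf⟩
    exact edge_of_infix hl.2.2 hinf
  -- any list which is an infix of a T₀-walk to an observed vertex is Erel-chained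
  have hChain : ∀ p ∈ X, ∀ l : List V, IsWalk T₀.edges s p.1 l → l.Chain' Erel := by
    intro p hp l hl
    refine List.isChain_iff_getElem.mpr ?_
    intro i hi
    exact ⟨p, hp, l, hl, infix_pair (by omega)⟩
  -- the canonical T₀-walk to each observed vertex
  have hfw : ∀ p ∈ X, ∃ l, IsWalk T₀.edges s p.1 l := fun p hp =>
    (T₀.unique_walk p.1 (hsT₀ p hp)).exists
  refine ⟨⟨{u | ∃ p ∈ X, ∃ l, IsWalk T₀.edges s p.1 l ∧ u ∈ l}, Erel,
      fun u u' h => T₀.edges_sub u u' (hE0 u u' h), ?_, ?_, ?_⟩, rfl, rfl, ?_, ?_⟩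
  · -- edges_mem
    rintro u u' ⟨p, hp, l, hl, hinf⟩
    have hsubl := hinf.sublist.subset
    exact ⟨⟨p, hp, l, hl, hsubl (by simp)⟩, ⟨p, hp, l, hl, hsubl (by simp)⟩⟩
  · -- root_mem
    obtain ⟨l, hl⟩ := hfw (s, 0) hsX
    exact ⟨(s, 0), hsX, l, hl, List.mem_of_mem_head? (by rw [hl.1]; rfl)⟩
  · -- unique_walk
    rintro v ⟨p, hp, l, hl, hvl⟩
    obtain ⟨i, hi, rfl⟩ := List.mem_iff_getElem.mp hvl
    have w0 := take_isWalk hl hi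
    have wT : IsWalk Erel s l[i] (l.take (i+1)) :=
      ⟨w0.1, w0.2.1, (hChain p hp l hl).prefix (List.take_prefix _ _)⟩
    have vmem : l[i] ∈ T₀.verts := mem_verts_of_walk T₀ hl l[i] (List.getElem_mem hi)
    refine ⟨l.take (i+1), wT, fun m hm => ?_⟩
    exact (T₀.unique_walk _ vmem).unique (walk_sub hm hE0) w0
  · -- bounded consistency
    intro p hp
    obtain ⟨l, hl⟩ := hfw p hp
    refine ⟨⟨p, hp, l, hl, List.mem_of_mem_getLast? (by rw [hl.2.1]; rfl)⟩, ?_⟩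
    intro m hm
    have := hT₀d p.1 (hsT₀ p hp) m (walk_sub hm hE0)
    rw [this]
    exact (hX p hp).2
  · -- approximation guarantee
    intro T' hT'
    set K := Set.ncard {e : V × V | T'.edges e.1 e.2} with hK
    set f : V × ℕ → List V := fun p =>
      if h : p.1 ∈ T₀.verts then (T₀.unique_walk p.1 h).exists.choose else [] with hf
    have hfspec : ∀ p ∈ X, IsWalk T₀.edges s p.1 (f p) := by
      intro p hp
      rw [hf]
      simp only [hsT₀ p hp, dif_pos]
      exact (T₀.unique_walk p.1 (hsT₀ p hp)).exists.choose_spec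
    have hsub : {e : V × V | Erel e.1 e.2} ⊆ ⋃ p ∈ X, {e : V × V | [e.1, e.2] <:+: f p} := by
      rintro e ⟨p, hp, l, hl, hinf⟩
      have hlf : l = f p := (T₀.unique_walk p.1 (hsT₀ p hp)).unique hl (hfspec p hp)
      exact Set.mem_biUnion hp (by rw [← hlf]; exact hinf)
    have hper : ∀ p ∈ X, Set.ncard {e : V × V | [e.1, e.2] <:+: f p} ≤ K := by
      intro p hp
      obtain ⟨m, hm⟩ := (T'.unique_walk p.1 (hT' p hp).1).exists
      calc Set.ncard {e : V × V | [e.1, e.2] <:+: f p} ≤ wlen (f p) :=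
            walk_edge_set_ncard (f p)
        _ = gdist E s p.1 := hT₀d p.1 (hsT₀ p hp) (f p) (hfspec p hp)
        _ ≤ wlen m := Nat.sInf_le ⟨m, walk_sub hm T'.edges_sub, rfl⟩
        _ ≤ K := walk_wlen_le T' hm
    calc Set.ncard {e : V × V | Erel e.1 e.2}
        ≤ Set.ncard (⋃ p ∈ X, {e : V × V | [e.1, e.2] <:+: f p}) :=
          Set.ncard_le_ncard hsub (Set.toFinite _)
      _ ≤ ∑ p ∈ X, Set.ncard {e : V × V | [e.1, e.2] <:+: f p} := ncard_biUnion_le X _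
      _ ≤ ∑ _p ∈ X, K := Finset.sum_le_sum hper
      _ = X.card * K := by rw [Finset.sum_const, smul_eq_mul]
end

section
/- Let G be a finite directed graph, s a vertex, X a partial observation with (s,0) ∈ X, and let T be a perfect consistent tree w.r.t. X such that every leaf of T (vertex of T with no outgoing edge in T) occurs as the first component of some pair in X. Then for every vertex u of T there exists a pair (v,t) ∈ X such that dist_G(s,u) + dist_G(u,v) ≤ t. (This is the correctness of the pruning rule used to construct the backbone network: any vertex u with dist(s,u) + dist(u,v) > t for all observation points (v,t) can be removed.) -/
namespace Stmt9Aux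

variable {V : Type*}

lemma walk_ne_nil {E : V → V → Prop} {u v : V} {l : List V} (h : IsWalk E u v l) : l ≠ [] := by
  rintro rfl; simp [IsWalk] at h

lemma walk_length_pos {E : V → V → Prop} {u v : V} {l : List V} (h : IsWalk E u v l) :
    0 < l.length :=
  List.length_pos_iff.2 (walk_ne_nil h)

lemma gdist_le_wlen {E : V → V → Prop} {u v : V} {l : List V} (h : IsWalk E u v l) :
    gdist E u v ≤ wlen l :=
  Nat.sInf_le ⟨l, h, rfl⟩

lemma walk_mono {E F : V → V → Prop} (hEF : ∀ a b, E a b → F a b) {u v : V} {l : List V}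
    (h : IsWalk E u v l) : IsWalk F u v l :=
  ⟨h.1, h.2.1, List.IsChain.imp hEF h.2.2⟩

lemma walk_single (E : V → V → Prop) (u : V) : IsWalk E u u [u] := by
  refine ⟨rfl, rfl, List.isChain_singleton _⟩

lemma walk_concat {E : V → V → Prop} {s u z : V} {l : List V}
    (h : IsWalk E s u l) (hz : E u z) : IsWalk E s z (l ++ [z]) := by
  obtain ⟨h1, h2, h3⟩ := h
  refine ⟨?_, List.getLast?_concat, ?_⟩
  · rcases l with _ | ⟨a, l'⟩
    · simp at h1
    · simpa using h1
  · show List.IsChain _ _; rw [List.isChain_append]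
    refine ⟨h3, by simp, ?_⟩
    intro x hx y hy
    simp only [List.head?_cons, Option.mem_def, Option.some.injEq] at hy
    subst hy
    rw [h2] at hx
    simp only [Option.mem_def, Option.some.injEq] at hx
    subst hx
    exact hz

lemma walk_cons {E : V → V → Prop} {u z w : V} {l : List V}
    (hz : E u z) (h : IsWalk E z w l) : IsWalk E u w (u :: l) := by
  obtain ⟨h1, h2, h3⟩ := h
  refine ⟨rfl, ?_, ?_⟩
  · rw [List.getLast?_cons, h2]
    rfl
  · show List.IsChain _ _; rw [List.isChain_cons]
    refine ⟨fun y hy => ?_, h3⟩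
    rw [h1] at hy
    simp only [Option.mem_def, Option.some.injEq] at hy
    subst hy
    exact hz

lemma walk_take {E : V → V → Prop} {s v : V} {l : List V} (h : IsWalk E s v l)
    {i : ℕ} (hi : i < l.length) : IsWalk E s l[i] (l.take (i + 1)) := by
  obtain ⟨h1, h2, h3⟩ := h
  refine ⟨?_, ?_, h3.take _⟩
  · rw [List.head?_eq_getElem?, List.getElem?_take, if_pos (by omega),
      ← List.head?_eq_getElem?, h1]
  · have hlen : (l.take (i + 1)).length = i + 1 := by
      rw [List.length_take]; omega
    rw [List.getLast?_eq_getElem?, hlen]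
    simp only [Nat.add_sub_cancel]
    rw [List.getElem?_take, if_pos (by omega)]
    simp [hi]

lemma walk_append {E : V → V → Prop} {s u w : V} {l1 l2 : List V}
    (h1 : IsWalk E s u l1) (h2 : IsWalk E u w l2) :
    IsWalk E s w (l1 ++ l2.tail) ∧ wlen (l1 ++ l2.tail) = wlen l1 + wlen l2 := by
  have hl1pos := walk_length_pos h1
  obtain ⟨ha1, ha2, ha3⟩ := h1
  obtain ⟨hb1, hb2, hb3⟩ := h2
  rcases l2 with _ | ⟨a, t⟩
  · simp at hb1
  have hau : a = u := by simpa using hb1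
  subst hau
  constructor
  · refine ⟨?_, ?_, ?_⟩
    · rcases l1 with _ | ⟨b, t1⟩
      · simp at ha1
      · simpa using ha1
    · rcases t with _ | ⟨c, t'⟩
      · simp only [List.tail_cons, List.append_nil]
        rw [ha2]
        simpa using hb2
      · simp only [List.tail_cons]
        rw [List.getLast?_append]
        rw [List.getLast?_cons] at hb2
        simp_all [List.getLast?_cons]
    · show List.IsChain _ _; rw [List.isChain_append]
      refine ⟨ha3, List.IsChain.tail hb3, ?_⟩
      intro x hx y hy
      rw [ha2] at hx
      simp only [Option.mem_def, Option.some.injEq] at hx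
      subst hx
      simp only [List.tail_cons] at hy
      exact (List.isChain_cons.1 hb3).1 y hy
  · simp only [List.tail_cons, wlen, List.length_append, List.length_cons]
    omega

lemma descend {E : V → V → Prop} {s : V} [Fintype V] [DecidableEq V]
    (T : Arb E s) (X : Finset (V × ℕ))
    (hleaf : ∀ u ∈ T.verts, (∀ z, ¬ T.edges u z) → ∃ t, (u, t) ∈ X) :
    ∀ (n : ℕ) (ls : List V) (u : V), (Finset.univ \ ls.toFinset).card ≤ n →
      u ∈ T.verts → IsWalk T.edges s u ls →
      ∃ w t lw, (w, t) ∈ X ∧ IsWalk T.edges u w lw := by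
  intro n
  induction n with
  | zero =>
    intro ls u hcard hu hw
    by_cases hlf : ∀ z, ¬ T.edges u z
    · obtain ⟨t, ht⟩ := hleaf u hu hlf
      exact ⟨u, t, [u], ht, walk_single _ _⟩
    · push_neg at hlf
      obtain ⟨z, hz⟩ := hlf
      have hzls : z ∉ ls := by
        intro hmem
        obtain ⟨i, hi, hiz⟩ := List.mem_iff_getElem.1 hmem
        have hp : IsWalk T.edges s z (ls.take (i + 1)) := hiz ▸ walk_take hw hi
        have hq : IsWalk T.edges s z (ls ++ [z]) := walk_concat hw hz
        obtain ⟨l0, _, huniq⟩ := T.unique_walk z (T.edges_mem u z hz).2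
        have heq : ls.take (i + 1) = ls ++ [z] := (huniq _ hp).trans (huniq _ hq).symm
        have := congrArg List.length heq
        simp only [List.length_take, List.length_append, List.length_cons,
          List.length_nil] at this
        omega
      have : z ∈ Finset.univ \ ls.toFinset := by simp [hzls]
      have := Finset.card_pos.2 ⟨z, this⟩
      omega
  | succ n ih =>
    intro ls u hcard hu hw
    by_cases hlf : ∀ z, ¬ T.edges u z
    · obtain ⟨t, ht⟩ := hleaf u hu hlf
      exact ⟨u, t, [u], ht, walk_single _ _⟩
    · push_neg at hlf
      obtain ⟨z, hz⟩ := hlf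
      have hzls : z ∉ ls := by
        intro hmem
        obtain ⟨i, hi, hiz⟩ := List.mem_iff_getElem.1 hmem
        have hp : IsWalk T.edges s z (ls.take (i + 1)) := hiz ▸ walk_take hw hi
        have hq : IsWalk T.edges s z (ls ++ [z]) := walk_concat hw hz
        obtain ⟨l0, _, huniq⟩ := T.unique_walk z (T.edges_mem u z hz).2
        have heq : ls.take (i + 1) = ls ++ [z] := (huniq _ hp).trans (huniq _ hq).symm
        have := congrArg List.length heq
        simp only [List.length_take, List.length_append, List.length_cons,
          List.length_nil] at this
        omega
      have hzmem : z ∈ Finset.univ \ ls.toFinset := by simp [hzls]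
      have hsub : Finset.univ \ (ls ++ [z]).toFinset ⊆ (Finset.univ \ ls.toFinset).erase z := by
        intro x hx
        simp only [Finset.mem_sdiff, Finset.mem_univ, true_and, List.toFinset_append,
          List.toFinset_cons, List.toFinset_nil, Finset.mem_union, Finset.mem_insert,
          Finset.mem_erase, not_or] at hx ⊢
        tauto
      have hlt : (Finset.univ \ (ls ++ [z]).toFinset).card ≤ n := by
        have h1 := Finset.card_le_card hsub
        have h2 := Finset.card_erase_lt_of_mem hzmem
        omega
      obtain ⟨w, t, lw, hwt, hlw⟩ := ih (ls ++ [z]) z hlt (T.edges_mem u z hz).2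
        (walk_concat hw hz)
      exact ⟨w, t, u :: lw, hwt, walk_cons hz hlw⟩

end Stmt9Aux

/-- Correctness of the pruning rule for the backbone network: if `T` is a perfect
consistent tree w.r.t. the partial observation `X` and every leaf of `T` occurs in
`X`, then every vertex `u` of `T` admits an observation point `(v,t) ∈ X` with
`dist_G(s,u) + dist_G(u,v) ≤ t`. -/
theorem stmt_9 {V : Type*} [Fintype V] (E : V → V → Prop) (s : V)
    (X : Finset (V × ℕ)) (hsX : (s, 0) ∈ X) (T : Arb E s)
    (hperf : ∀ p ∈ X, p.1 ∈ T.verts ∧ ∀ l, IsWalk T.edges s p.1 l → wlen l = p.2)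
    (hleaf : ∀ u ∈ T.verts, (∀ z, ¬ T.edges u z) → ∃ t, (u, t) ∈ X) :
    ∀ u ∈ T.verts, ∃ p ∈ X, gdist E s u + gdist E u p.1 ≤ p.2 := by
  classical
  intro u hu
  obtain ⟨ls, hls, -⟩ := T.unique_walk u hu
  obtain ⟨w, t, lw, hwt, hlw⟩ := Stmt9Aux.descend T X hleaf _ ls u le_rfl hu hls
  obtain ⟨hcomb, hclen⟩ := Stmt9Aux.walk_append hls hlw
  have ht : wlen (ls ++ lw.tail) = t := (hperf (w, t) hwt).2 _ hcomb
  have h1 : gdist E s u ≤ wlen ls :=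
    Stmt9Aux.gdist_le_wlen (Stmt9Aux.walk_mono T.edges_sub hls)
  have h2 : gdist E u w ≤ wlen lw :=
    Stmt9Aux.gdist_le_wlen (Stmt9Aux.walk_mono T.edges_sub hlw)
  exact ⟨(w, t), hwt, by simp only []; omega⟩
end
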